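/- Let γ₁, γ₂, h₁, h₂ > 0 with γ₂ − γ₁ > 1 and d ≥ 2. Then the function g_s(R) = 1 − γ₂R^d/(R²+h₂²)^{d/2} + γ₁R^d/(R²+h₁²)^{d/2} has exactly one zero R_s in (0,∞), i.e., there is a unique R_s > 0 with γ₂/(1+(h₂/R_s)²)^{d/2} − γ₁/(1+(h₁/R_s)²)^{d/2} = 1. -/

import Mathlib

open Real Filter Set Topology



lemma term_hasDerivAt (γ h p R : ℝ) (hR : 0 < R) (hp : 1 ≤ p) :
    HasDerivAt (fun r => γ / (1 + (h / r) ^ 2) ^ p)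
      (2 * γ * p * h ^ 2 / R ^ 3 / (1 + (h / R) ^ 2) ^ (p + 1)) R := by
  have hRne : R ≠ 0 := hR.ne'
  have hA : (0:ℝ) < 1 + (h / R) ^ 2 := by positivity
  have hu : HasDerivAt (fun r : ℝ => 1 + (h / r) ^ 2) (-(2 * h ^ 2) / R ^ 3) R := by
    have h1 : HasDerivAt (fun r : ℝ => r ^ 2) (2 * R) R := by
      simpa using hasDerivAt_pow 2 R
    have h2 : HasDerivAt (fun r : ℝ => 1 + h ^ 2 * (r ^ 2)⁻¹)
        (h ^ 2 * (-(2 * R) / (R ^ 2) ^ 2)) R :=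
      ((h1.inv (pow_ne_zero 2 hRne)).const_mul (h ^ 2)).const_add 1
    have heq : (fun r : ℝ => 1 + h ^ 2 * (r ^ 2)⁻¹) = fun r : ℝ => 1 + (h / r) ^ 2 := by
      funext r; rw [div_pow, div_eq_mul_inv]
    rw [heq] at h2
    convert h2 using 1
    field_simp
  have hv : HasDerivAt (fun r : ℝ => (1 + (h / r) ^ 2) ^ p)
      (-(2 * h ^ 2) / R ^ 3 * p * (1 + (h / R) ^ 2) ^ (p - 1)) R :=
    hu.rpow_const (Or.inr hp)
  have hvne : (1 + (h / R) ^ 2) ^ p ≠ 0 := (rpow_pos_of_pos hA p).ne'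
  have hd := (hasDerivAt_const R γ).div hv hvne
  refine hd.congr_deriv ?_
  have key : ((1 + (h / R) ^ 2) ^ p) ^ 2
      = (1 + (h / R) ^ 2) ^ (p + 1) * (1 + (h / R) ^ 2) ^ (p - 1) := by
    rw [← rpow_natCast ((1 + (h / R) ^ 2) ^ p) 2, ← rpow_mul hA.le, ← rpow_add hA]
    norm_num
    ring_nf
  rw [key]
  have h1 : (1 + (h / R) ^ 2) ^ (p + 1) ≠ 0 := (rpow_pos_of_pos hA _).ne'
  have h2 : (1 + (h / R) ^ 2) ^ (p - 1) ≠ 0 := (rpow_pos_of_pos hA _).ne'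
  field_simp
  ring

lemma sign_equiv (p γa γb ha hb R : ℝ) (hR : 0 < R) :
    γa * ha ^ 2 / (1 + (ha / R) ^ 2) ^ (p + 1)
      < γb * hb ^ 2 / (1 + (hb / R) ^ 2) ^ (p + 1) ↔
    γa * ha ^ 2 * (R ^ 2 + hb ^ 2) ^ (p + 1)
      < γb * hb ^ 2 * (R ^ 2 + ha ^ 2) ^ (p + 1) := by
  have hA : (0:ℝ) < 1 + (ha / R) ^ 2 := by positivity
  have hB : (0:ℝ) < 1 + (hb / R) ^ 2 := by positivity
  have hR2 : (0:ℝ) < R ^ 2 := by positivity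
  rw [div_lt_div_iff₀ (rpow_pos_of_pos hA _) (rpow_pos_of_pos hB _)]
  have ea : 1 + (ha / R) ^ 2 = (R ^ 2 + ha ^ 2) / R ^ 2 := by field_simp
  have eb : 1 + (hb / R) ^ 2 = (R ^ 2 + hb ^ 2) / R ^ 2 := by field_simp
  rw [ea, eb, div_rpow (by positivity) hR2.le, div_rpow (by positivity) hR2.le]
  have hC : (0:ℝ) < (R ^ 2) ^ (p + 1) := rpow_pos_of_pos hR2 _
  constructor
  · intro hlt
    calc γa * ha ^ 2 * (R ^ 2 + hb ^ 2) ^ (p + 1)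
        = γa * ha ^ 2 * ((R ^ 2 + hb ^ 2) ^ (p + 1) / (R ^ 2) ^ (p + 1)) * (R ^ 2) ^ (p + 1) := by
          field_simp
      _ < γb * hb ^ 2 * ((R ^ 2 + ha ^ 2) ^ (p + 1) / (R ^ 2) ^ (p + 1)) * (R ^ 2) ^ (p + 1) :=
          mul_lt_mul_of_pos_right hlt hC
      _ = γb * hb ^ 2 * (R ^ 2 + ha ^ 2) ^ (p + 1) := by field_simp
  · intro hlt
    calc γa * ha ^ 2 * ((R ^ 2 + hb ^ 2) ^ (p + 1) / (R ^ 2) ^ (p + 1))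
        = γa * ha ^ 2 * (R ^ 2 + hb ^ 2) ^ (p + 1) / (R ^ 2) ^ (p + 1) := by ring
      _ < γb * hb ^ 2 * (R ^ 2 + ha ^ 2) ^ (p + 1) / (R ^ 2) ^ (p + 1) :=
          div_lt_div_of_pos_right hlt hC
      _ = γb * hb ^ 2 * ((R ^ 2 + ha ^ 2) ^ (p + 1) / (R ^ 2) ^ (p + 1)) := by ring

lemma Wlt (p γa γb ha hb R c : ℝ) (hp : 0 < p + 1) (hγa : 0 < γa)
    (hha : 0 < ha) (hhb : 0 < hb) (hR : 0 < R) (hc : 0 < c)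
    (heq : γb * hb ^ 2 * (c ^ 2 + ha ^ 2) ^ (p + 1)
        = γa * ha ^ 2 * (c ^ 2 + hb ^ 2) ^ (p + 1))
    (hcross : (R ^ 2 + hb ^ 2) * (c ^ 2 + ha ^ 2)
        < (c ^ 2 + hb ^ 2) * (R ^ 2 + ha ^ 2)) :
    γa * ha ^ 2 * (R ^ 2 + hb ^ 2) ^ (p + 1)
      < γb * hb ^ 2 * (R ^ 2 + ha ^ 2) ^ (p + 1) := by
  have h2 : γa * ha ^ 2 * (R ^ 2 + hb ^ 2) ^ (p + 1) * (c ^ 2 + ha ^ 2) ^ (p + 1)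
      < γb * hb ^ 2 * (R ^ 2 + ha ^ 2) ^ (p + 1) * (c ^ 2 + ha ^ 2) ^ (p + 1) := by
    calc γa * ha ^ 2 * (R ^ 2 + hb ^ 2) ^ (p + 1) * (c ^ 2 + ha ^ 2) ^ (p + 1)
        = γa * ha ^ 2 * ((R ^ 2 + hb ^ 2) ^ (p + 1) * (c ^ 2 + ha ^ 2) ^ (p + 1)) := by ring
      _ < γa * ha ^ 2 * ((c ^ 2 + hb ^ 2) ^ (p + 1) * (R ^ 2 + ha ^ 2) ^ (p + 1)) := by
          apply mul_lt_mul_of_pos_left _ (by positivity)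
          rw [← mul_rpow (by positivity) (by positivity),
            ← mul_rpow (by positivity) (by positivity)]
          exact rpow_lt_rpow (by positivity) hcross hp
      _ = γa * ha ^ 2 * (c ^ 2 + hb ^ 2) ^ (p + 1) * (R ^ 2 + ha ^ 2) ^ (p + 1) := by ring
      _ = γb * hb ^ 2 * (c ^ 2 + ha ^ 2) ^ (p + 1) * (R ^ 2 + ha ^ 2) ^ (p + 1) := by
          rw [← heq]
      _ = γb * hb ^ 2 * (R ^ 2 + ha ^ 2) ^ (p + 1) * (c ^ 2 + ha ^ 2) ^ (p + 1) := by ring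
  exact lt_of_mul_lt_mul_right h2 (by positivity)

lemma term_top (γ h p : ℝ) :
    Tendsto (fun r : ℝ => γ / (1 + (h / r) ^ 2) ^ p) atTop (𝓝 γ) := by
  have h1 : Tendsto (fun r : ℝ => h / r) atTop (𝓝 0) :=
    tendsto_const_nhds.div_atTop tendsto_id
  have h2 : Tendsto (fun r : ℝ => 1 + (h / r) ^ 2) atTop (𝓝 1) := by
    have := (h1.pow 2).const_add 1
    simpa using this
  have h3 : Tendsto (fun r : ℝ => (1 + (h / r) ^ 2) ^ p) atTop (𝓝 1) := by
    have hc : ContinuousAt (fun x : ℝ => x ^ p) 1 :=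
      Real.continuousAt_rpow_const 1 p (Or.inl one_ne_zero)
    have := hc.tendsto.comp h2
    simpa [Real.one_rpow, Function.comp_def] using this
  simpa [Pi.div_def] using tendsto_const_nhds.div h3 one_ne_zero

lemma term_zero (γ h p : ℝ) (hh : 0 < h) (hp : 0 < p) :
    Tendsto (fun r : ℝ => γ / (1 + (h / r) ^ 2) ^ p) (𝓝[>] (0:ℝ)) (𝓝 0) := by
  have h1 : Tendsto (fun r : ℝ => h / r) (𝓝[>] (0:ℝ)) atTop := by
    simpa [div_eq_mul_inv] using tendsto_inv_nhdsGT_zero.const_mul_atTop hh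
  have h2 : Tendsto (fun r : ℝ => (h / r) ^ 2) (𝓝[>] (0:ℝ)) atTop :=
    (tendsto_pow_atTop (two_ne_zero)).comp h1
  have h3 : Tendsto (fun r : ℝ => 1 + (h / r) ^ 2) (𝓝[>] (0:ℝ)) atTop :=
    tendsto_atTop_add_const_left _ 1 h2
  have h4 : Tendsto (fun r : ℝ => (1 + (h / r) ^ 2) ^ p) (𝓝[>] (0:ℝ)) atTop :=
    (tendsto_rpow_atTop hp).comp h3
  exact tendsto_const_nhds.div_atTop h4

noncomputable def gsF (p γ₁ γ₂ h₁ h₂ : ℝ) : ℝ → ℝ :=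
  fun r => γ₂ / (1 + (h₂ / r) ^ 2) ^ p - γ₁ / (1 + (h₁ / r) ^ 2) ^ p

set_option maxHeartbeats 1000000 in
theorem gs_aux (p γ₁ γ₂ h₁ h₂ : ℝ) (hp1 : 1 ≤ p)
    (hγ₁ : 0 < γ₁) (hγ₂ : 0 < γ₂) (hh₁ : 0 < h₁) (hh₂ : 0 < h₂)
    (hγ : 1 < γ₂ - γ₁) :
    ∃! R : ℝ, 0 < R ∧
      γ₂ / (1 + (h₂ / R) ^ 2) ^ p
        - γ₁ / (1 + (h₁ / R) ^ 2) ^ p = 1 := by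
  have hp0 : 0 < p := lt_of_lt_of_le one_pos hp1
  suffices h : ∃! R : ℝ, 0 < R ∧ gsF p γ₁ γ₂ h₁ h₂ R = 1 by
    simpa only [gsF] using h
  set f := gsF p γ₁ γ₂ h₁ h₂ with hfd
  have hD : ∀ R, 0 < R → HasDerivAt f
      (2 * p / R ^ 3 * (γ₂ * h₂ ^ 2 / (1 + (h₂ / R) ^ 2) ^ (p + 1)
        - γ₁ * h₁ ^ 2 / (1 + (h₁ / R) ^ 2) ^ (p + 1))) R := by
    intro R hR
    rw [hfd]; unfold gsF
    have := (term_hasDerivAt γ₂ h₂ p R hR hp1).sub (term_hasDerivAt γ₁ h₁ p R hR hp1)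
    refine this.congr_deriv ?_
    ring
  have hcont : ∀ s : Set ℝ, s ⊆ Ioi 0 → ContinuousOn f s := fun s hs x hx =>
    ((hD x (hs hx)).continuousAt).continuousWithinAt
  have htop : Tendsto f atTop (𝓝 (γ₂ - γ₁)) := by
    rw [hfd]; unfold gsF; exact (term_top γ₂ h₂ p).sub (term_top γ₁ h₁ p)
  have hzero : Tendsto f (𝓝[>] 0) (𝓝 0) := by
    rw [hfd]; unfold gsF
    simpa using (term_zero γ₂ h₂ p hh₂ hp0).sub (term_zero γ₁ h₁ p hh₁ hp0)
  -- existence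
  obtain ⟨a, hfa, ha0⟩ := ((hzero.eventually_lt_const one_pos).and self_mem_nhdsWithin).exists
  have ha0' : (0:ℝ) < a := ha0
  obtain ⟨b, hfb, hab⟩ := ((htop.eventually_const_lt (by linarith : (1:ℝ) < γ₂ - γ₁)).and
    (eventually_gt_atTop a)).exists
  obtain ⟨R, hRmem, hfR⟩ := intermediate_value_Icc hab.le
    (hcont _ (fun x hx => lt_of_lt_of_le ha0' hx.1)) ⟨hfa.le, hfb.le⟩
  have hR0 : 0 < R := lt_of_lt_of_le ha0' hRmem.1
  -- two-zeros contradiction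
  have key : ∀ R₁ R₂, 0 < R₁ → R₁ < R₂ → f R₁ = 1 → f R₂ = 1 → False := by
    intro R₁ R₂ hR₁ hlt hz₁ hz₂
    obtain ⟨c, hcmem, hDc⟩ := exists_hasDerivAt_eq_zero hlt
      (hcont _ (fun x hx => lt_of_lt_of_le hR₁ hx.1)) (hz₁.trans hz₂.symm)
      (fun x hx => hD x (hR₁.trans hx.1))
    have hc0 : 0 < c := hR₁.trans hcmem.1
    have hq : (0:ℝ) < p + 1 := by linarith
    have hS : γ₂ * h₂ ^ 2 / (1 + (h₂ / c) ^ 2) ^ (p + 1)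
        = γ₁ * h₁ ^ 2 / (1 + (h₁ / c) ^ 2) ^ (p + 1) := by
      rcases mul_eq_zero.mp hDc with h | h
      · exact absurd h (ne_of_gt (div_pos (by linarith) (by positivity)))
      · linarith
    have hWc : γ₂ * h₂ ^ 2 * (c ^ 2 + h₁ ^ 2) ^ (p + 1)
        = γ₁ * h₁ ^ 2 * (c ^ 2 + h₂ ^ 2) ^ (p + 1) := by
      by_contra hne
      rcases lt_or_gt_of_ne hne with hlt' | hlt'
      · have := (sign_equiv p γ₂ γ₁ h₂ h₁ c hc0).mpr hlt'
        linarith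
      · have := (sign_equiv p γ₁ γ₂ h₁ h₂ c hc0).mpr hlt'
        linarith
    rcases lt_trichotomy h₁ h₂ with hh | hh | hh
    · -- h₁ < h₂ : f strictly decreasing on Ioc 0 c, contradiction near 0
      have hanti : StrictAntiOn f (Ioc 0 c) := by
        apply strictAntiOn_of_deriv_neg (convex_Ioc 0 c) (hcont _ (fun x hx => hx.1))
        intro x hx
        rw [interior_Ioc] at hx
        obtain ⟨hx1, hxc⟩ := hx
        rw [(hD x hx1).deriv]
        have hx2 : x ^ 2 < c ^ 2 := by nlinarith [hx1, hxc]
        have hh2 : h₁ ^ 2 < h₂ ^ 2 := by nlinarith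
        have hW : γ₂ * h₂ ^ 2 * (x ^ 2 + h₁ ^ 2) ^ (p + 1)
            < γ₁ * h₁ ^ 2 * (x ^ 2 + h₂ ^ 2) ^ (p + 1) := by
          apply Wlt p γ₂ γ₁ h₂ h₁ x c hq hγ₂ hh₂ hh₁ hx1 hc0 hWc.symm
          nlinarith [mul_pos (sub_pos.mpr hx2) (sub_pos.mpr hh2)]
        have hSx := (sign_equiv p γ₂ γ₁ h₂ h₁ x hx1).mpr hW
        exact mul_neg_of_pos_of_neg (div_pos (by linarith) (by positivity)) (by linarith)
      have hev : ∀ᶠ r in 𝓝[>] (0:ℝ), (1:ℝ) ≤ f r := by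
        filter_upwards [self_mem_nhdsWithin,
          Ioo_mem_nhdsGT_of_mem ⟨le_refl (0:ℝ), hR₁⟩] with r hr1 hr2
        have : f R₁ < f r :=
          hanti ⟨hr1, le_of_lt (hr2.2.trans_le hcmem.1.le)⟩ ⟨hR₁, hcmem.1.le⟩ hr2.2
        rw [hz₁] at this
        linarith
      have := ge_of_tendsto hzero hev
      linarith
    · -- h₁ = h₂
      rw [hh] at hWc
      have hQ : (0:ℝ) < h₂ ^ 2 * (c ^ 2 + h₂ ^ 2) ^ (p + 1) := by positivity
      have h1 : γ₂ * (h₂ ^ 2 * (c ^ 2 + h₂ ^ 2) ^ (p + 1))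
          = γ₁ * (h₂ ^ 2 * (c ^ 2 + h₂ ^ 2) ^ (p + 1)) := by
        linear_combination hWc
      have h2 : γ₂ = γ₁ := mul_right_cancel₀ (ne_of_gt hQ) h1
      linarith
    · -- h₂ < h₁ : f strictly decreasing on Ici c, contradiction at infinity
      have hanti : StrictAntiOn f (Ici c) := by
        apply strictAntiOn_of_deriv_neg (convex_Ici c)
          (hcont _ (fun x hx => lt_of_lt_of_le hc0 hx))
        intro x hx
        rw [interior_Ici] at hx
        have hcx : c < x := hx
        have hx0 : 0 < x := hc0.trans hcx
        rw [(hD x hx0).deriv]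
        have hx2 : c ^ 2 < x ^ 2 := by nlinarith [hcx, hc0]
        have hh2 : h₂ ^ 2 < h₁ ^ 2 := by nlinarith
        have hW : γ₂ * h₂ ^ 2 * (x ^ 2 + h₁ ^ 2) ^ (p + 1)
            < γ₁ * h₁ ^ 2 * (x ^ 2 + h₂ ^ 2) ^ (p + 1) := by
          apply Wlt p γ₂ γ₁ h₂ h₁ x c hq hγ₂ hh₂ hh₁ hx0 hc0 hWc.symm
          nlinarith [mul_pos (sub_pos.mpr hx2) (sub_pos.mpr hh2)]
        have hSx := (sign_equiv p γ₂ γ₁ h₂ h₁ x hx0).mpr hW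
        exact mul_neg_of_pos_of_neg (div_pos (by linarith) (by positivity)) (by linarith)
      have hev : ∀ᶠ r in atTop, f r ≤ 1 := by
        filter_upwards [eventually_gt_atTop R₂] with r hr
        have : f r < f R₂ := hanti (le_of_lt hcmem.2) (le_of_lt (hcmem.2.trans hr)) hr
        rw [hz₂] at this
        linarith
      have := le_of_tendsto htop hev
      linarith
  refine ⟨R, ⟨hR0, hfR⟩, ?_⟩
  intro y hy
  rcases lt_trichotomy y R with h | h | h
  · exact (key y R hy.1 h hy.2 hfR).elim
  · exact h
  · exact (key R y hR0 h hfR hy.2).elim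

/-- When `γ₂ − γ₁ > 1`, `g_s` has exactly one zero in `(0,∞)`. -/
theorem gs_unique_zero (d γ₁ γ₂ h₁ h₂ : ℝ) (hd : 2 ≤ d)
    (hγ₁ : 0 < γ₁) (hγ₂ : 0 < γ₂) (hh₁ : 0 < h₁) (hh₂ : 0 < h₂)
    (hγ : 1 < γ₂ - γ₁) :
    ∃! R : ℝ, 0 < R ∧
      γ₂ / (1 + (h₂ / R) ^ 2) ^ (d / 2)
        - γ₁ / (1 + (h₁ / R) ^ 2) ^ (d / 2) = 1 := by
  exact gs_aux (d / 2) γ₁ γ₂ h₁ h₂ (by linarith) hγ₁ hγ₂ hh₁ hh₂ hγ
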